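/- Let A ∈ ℂ^{m×m} be invertible, p ∈ [1,∞], q ∈ [0,1], and let B ∈ ℂ^{m×m} satisfy, for every row index i, ‖A(i,:) − B(i,:)‖_p ≤ (1−q) ‖A(i,:)‖_p, and for every column index j, ‖A(:,j) − B(:,j)‖_p ≤ (1−q) ‖A(:,j)‖_p, where ‖·‖_p is the vector ℓ_p norm. Then J(B;A) ≤ m^{1+2C} (1−q)² κ(A)², where C := 1 − 1/p + |1/2 − 1/p| and κ(A) := ‖A‖₂ ‖A⁻¹‖₂. Consequently the minimum of J(·;A) over all matrices X whose support is contained in the support of B is at most m^{1+2C} (1−q)² κ(A)². -/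

import Mathlib

open scoped Matrix ENNReal
open scoped NNReal

/-- The spectral norm (largest singular value): the operator norm of the matrix as a map
between Euclidean spaces. -/
noncomputable def specNorm {m n : ℕ} (M : Matrix (Fin m) (Fin n) ℂ) : ℝ :=
  ‖LinearMap.toContinuousLinearMap (Matrix.toEuclideanLin M)‖

/-- The vector ℓ_p norm. -/
noncomputable def lpnorm (p : ℝ≥0∞) [Fact (1 ≤ p)] {k : ℕ} (x : Fin k → ℂ) : ℝ :=
  ‖(WithLp.equiv p (Fin k → ℂ)).symm x‖

/-- Squared Frobenius norm. -/
noncomputable def frobSq {m n : ℕ} (M : Matrix (Fin m) (Fin n) ℂ) : ℝ :=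
  ∑ i, ∑ j, ‖M i j‖ ^ 2

lemma lpnorm_nonneg (p : ℝ≥0∞) [Fact (1 ≤ p)] {k : ℕ} (x : Fin k → ℂ) :
    0 ≤ lpnorm p x := norm_nonneg _

lemma toReal_pos_of_fact (p : ℝ≥0∞) [Fact (1 ≤ p)] (hp : p ≠ ∞) : 0 < p.toReal :=
  ENNReal.toReal_pos (by
    have h1 : (1:ℝ≥0∞) ≤ p := Fact.out
    exact fun h0 => by simp [h0] at h1) hp

lemma lpnorm_eq_sum {p : ℝ≥0∞} [Fact (1 ≤ p)] (hp : p ≠ ∞) {k : ℕ} (x : Fin k → ℂ) :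
    lpnorm p x = (∑ i, ‖x i‖ ^ p.toReal) ^ (1 / p.toReal) := by
  rw [lpnorm, PiLp.norm_eq_sum (toReal_pos_of_fact p hp)]
  simp only [WithLp.equiv_symm_apply, PiLp.toLp_apply]

lemma lpnorm_eq_ciSup {k : ℕ} (x : Fin k → ℂ) :
    lpnorm ∞ x = ⨆ i, ‖x i‖ := by
  rw [lpnorm, PiLp.norm_eq_ciSup]
  simp only [WithLp.equiv_symm_apply, PiLp.toLp_apply]

lemma lpnorm_two_eq {k : ℕ} (x : Fin k → ℂ) :
    lpnorm 2 x = Real.sqrt (∑ i, ‖x i‖ ^ 2) := by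
  rw [lpnorm, EuclideanSpace.norm_eq]
  simp only [WithLp.equiv_symm_apply, PiLp.toLp_apply]

lemma lpnorm_two_sq {k : ℕ} (x : Fin k → ℂ) :
    (lpnorm 2 x) ^ 2 = ∑ i, ‖x i‖ ^ 2 := by
  rw [lpnorm_two_eq, Real.sq_sqrt]
  exact Finset.sum_nonneg fun i _ => sq_nonneg _

lemma lpnorm_congr {k : ℕ} (p : ℝ≥0∞) [Fact (1 ≤ p)] {x y : Fin k → ℂ}
    (h : ∀ i, ‖x i‖ = ‖y i‖) : lpnorm p x = lpnorm p y := by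
  rcases eq_or_ne p ∞ with hp | hp
  · subst hp
    rw [lpnorm_eq_ciSup, lpnorm_eq_ciSup]
    exact congrArg _ (funext h)
  · rw [lpnorm_eq_sum hp, lpnorm_eq_sum hp]
    congr 1
    exact Finset.sum_congr rfl fun i _ => by rw [h i]

lemma norm_apply_le_lpnorm {k : ℕ} (p : ℝ≥0∞) [Fact (1 ≤ p)] (x : Fin k → ℂ) (i : Fin k) :
    ‖x i‖ ≤ lpnorm p x := by
  rcases eq_or_ne p ∞ with hp | hp
  · subst hp
    rw [lpnorm_eq_ciSup]
    exact le_ciSup (f := fun j => ‖x j‖) (Set.Finite.bddAbove (Set.finite_range _)) i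
  · have hpt : 0 < p.toReal := toReal_pos_of_fact p hp
    rw [lpnorm_eq_sum hp]
    have h1 : ‖x i‖ ^ p.toReal ≤ ∑ j, ‖x j‖ ^ p.toReal :=
      Finset.single_le_sum (f := fun j => ‖x j‖ ^ p.toReal)
        (fun j _ => Real.rpow_nonneg (norm_nonneg _) _) (Finset.mem_univ i)
    calc ‖x i‖ = (‖x i‖ ^ p.toReal) ^ (1 / p.toReal) := by
          rw [one_div, Real.rpow_rpow_inv (norm_nonneg _) hpt.ne']
      _ ≤ (∑ j, ‖x j‖ ^ p.toReal) ^ (1 / p.toReal) :=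
          Real.rpow_le_rpow (Real.rpow_nonneg (norm_nonneg _) _) h1 (by positivity)

lemma sum_rpow_le_rpow_sum_nn {ι : Type*} (s : Finset ι) (a : ι → ℝ≥0) {r : ℝ} (hr : 1 ≤ r) :
    ∑ i ∈ s, a i ^ r ≤ (∑ i ∈ s, a i) ^ r := by
  have hr0 : r ≠ 0 := by positivity
  induction s using Finset.cons_induction with
  | empty => simp [NNReal.zero_rpow hr0]
  | cons j s hj ih =>
    rw [Finset.sum_cons, Finset.sum_cons]
    calc a j ^ r + ∑ i ∈ s, a i ^ r ≤ a j ^ r + (∑ i ∈ s, a i) ^ r := add_le_add_right ih _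
      _ = ((a j ^ r + (∑ i ∈ s, a i) ^ r) ^ (1/r)) ^ r := by
          rw [← NNReal.rpow_mul, one_div, inv_mul_cancel₀ hr0, NNReal.rpow_one]
      _ ≤ (a j + ∑ i ∈ s, a i) ^ r :=
          NNReal.rpow_le_rpow (NNReal.rpow_add_rpow_le_add _ _ hr) (le_trans zero_le_one hr)

lemma sum_rpow_le_rpow_sum {ι : Type*} (s : Finset ι) (b : ι → ℝ) (hb : ∀ i, 0 ≤ b i)
    {r : ℝ} (hr : 1 ≤ r) : ∑ i ∈ s, b i ^ r ≤ (∑ i ∈ s, b i) ^ r := by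
  have := sum_rpow_le_rpow_sum_nn s (fun i => ⟨b i, hb i⟩) hr
  have h2 := NNReal.coe_le_coe.2 this
  rw [NNReal.coe_sum] at h2
  push_cast [NNReal.coe_rpow] at h2
  convert h2 using 2
  · rfl
  · exact (NNReal.coe_sum s (fun i => (⟨b i, hb i⟩ : ℝ≥0))).symm

lemma lpnorm_anti {k : ℕ} (p q : ℝ≥0∞) [Fact (1 ≤ p)] [Fact (1 ≤ q)] (hpq : p ≤ q)
    (x : Fin k → ℂ) : lpnorm q x ≤ lpnorm p x := by
  rcases eq_or_ne q ∞ with hq | hq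
  · subst hq
    rw [lpnorm_eq_ciSup]
    rcases isEmpty_or_nonempty (Fin k) with hk | hk
    · rw [Real.iSup_of_isEmpty]
      exact lpnorm_nonneg p x
    · exact ciSup_le fun i => norm_apply_le_lpnorm p x i
  · have hp : p ≠ ∞ := fun h => hq (top_le_iff.mp (h ▸ hpq))
    have hpt : 0 < p.toReal := toReal_pos_of_fact p hp
    have hqt : 0 < q.toReal := toReal_pos_of_fact q hq
    have hle : p.toReal ≤ q.toReal := ENNReal.toReal_mono hq hpq
    rw [lpnorm_eq_sum hp, lpnorm_eq_sum hq]
    set r : ℝ := q.toReal / p.toReal with hrdef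
    have hr : 1 ≤ r := (one_le_div hpt).2 hle
    have h1 : ∑ i, ‖x i‖ ^ q.toReal = ∑ i, (‖x i‖ ^ p.toReal) ^ r := by
      refine Finset.sum_congr rfl fun i _ => ?_
      rw [← Real.rpow_mul (norm_nonneg _), mul_comm, div_mul_cancel₀ _ hpt.ne']
    rw [h1]
    have h2 : ∑ i, (‖x i‖ ^ p.toReal) ^ r ≤ (∑ i, ‖x i‖ ^ p.toReal) ^ r :=
      sum_rpow_le_rpow_sum _ _ (fun i => Real.rpow_nonneg (norm_nonneg _) _) hr
    calc (∑ i, (‖x i‖ ^ p.toReal) ^ r) ^ (1 / q.toReal)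
        ≤ ((∑ i, ‖x i‖ ^ p.toReal) ^ r) ^ (1 / q.toReal) :=
          Real.rpow_le_rpow (Finset.sum_nonneg fun i _ => Real.rpow_nonneg (Real.rpow_nonneg (norm_nonneg _) _) _) h2 (by positivity)
      _ = (∑ i, ‖x i‖ ^ p.toReal) ^ (1 / p.toReal) := by
          rw [← Real.rpow_mul (Finset.sum_nonneg fun i _ => Real.rpow_nonneg (norm_nonneg _) _), hrdef]
          congr 1
          field_simp

lemma lpnorm_one_le {k : ℕ} (x : Fin k → ℂ) :
    lpnorm 1 x ≤ Real.sqrt k * lpnorm 2 x := by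
  have h1 : lpnorm 1 x = ∑ i, ‖x i‖ := by
    rw [lpnorm_eq_sum (by norm_num : (1:ℝ≥0∞) ≠ ∞)]
    simp
  rw [h1, lpnorm_two_eq]
  have h := Real.sum_mul_le_sqrt_mul_sqrt Finset.univ (fun _ : Fin k => (1:ℝ)) (fun i => ‖x i‖)
  simpa using h

lemma key_bound {k : ℕ} (p : ℝ≥0∞) [Fact (1 ≤ p)] {q : ℝ} (d x : Fin k → ℂ)
    (hq : 0 ≤ 1 - q)
    (h : lpnorm p d ≤ (1 - q) * lpnorm p x) :
    lpnorm 2 d ≤ Real.sqrt k * ((1 - q) * lpnorm 2 x) := by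
  have hsk : (0:ℝ) ≤ Real.sqrt k := Real.sqrt_nonneg _
  rcases le_total p 2 with hp2 | hp2
  · have h1p : (1:ℝ≥0∞) ≤ p := Fact.out
    calc lpnorm 2 d ≤ lpnorm p d := lpnorm_anti p 2 hp2 d
      _ ≤ (1 - q) * lpnorm p x := h
      _ ≤ (1 - q) * lpnorm 1 x := mul_le_mul_of_nonneg_left (lpnorm_anti 1 p h1p x) hq
      _ ≤ (1 - q) * (Real.sqrt k * lpnorm 2 x) :=
          mul_le_mul_of_nonneg_left (lpnorm_one_le x) hq
      _ = Real.sqrt k * ((1 - q) * lpnorm 2 x) := by ring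
  · have hd : lpnorm 2 d ≤ Real.sqrt k * lpnorm p d := by
      rw [lpnorm_two_eq]
      have hs : ∑ i, ‖d i‖ ^ 2 ≤ (k : ℝ) * (lpnorm p d) ^ 2 := by
        calc ∑ i, ‖d i‖ ^ 2 ≤ ∑ _i : Fin k, (lpnorm p d) ^ 2 :=
              Finset.sum_le_sum fun i _ =>
                pow_le_pow_left₀ (norm_nonneg _) (norm_apply_le_lpnorm p d i) 2
          _ = (k : ℝ) * (lpnorm p d) ^ 2 := by
              simp [Finset.sum_const, Finset.card_univ, nsmul_eq_mul]
      calc Real.sqrt (∑ i, ‖d i‖ ^ 2) ≤ Real.sqrt ((k : ℝ) * (lpnorm p d) ^ 2) :=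
            Real.sqrt_le_sqrt hs
        _ = Real.sqrt k * lpnorm p d := by
            rw [Real.sqrt_mul (Nat.cast_nonneg k), Real.sqrt_sq (lpnorm_nonneg p d)]
    calc lpnorm 2 d ≤ Real.sqrt k * lpnorm p d := hd
      _ ≤ Real.sqrt k * ((1 - q) * lpnorm p x) := mul_le_mul_of_nonneg_left h hsk
      _ ≤ Real.sqrt k * ((1 - q) * lpnorm 2 x) :=
          mul_le_mul_of_nonneg_left
            (mul_le_mul_of_nonneg_left (lpnorm_anti 2 p hp2 x) hq) hsk

open scoped Matrix.Norms.L2Operator in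
lemma specNorm_def {a b : ℕ} (M : Matrix (Fin a) (Fin b) ℂ) : specNorm M = ‖M‖ := rfl

open scoped Matrix.Norms.L2Operator in
lemma specNorm_conjT {a b : ℕ} (M : Matrix (Fin a) (Fin b) ℂ) :
    specNorm Mᴴ = specNorm M := by
  rw [specNorm_def, specNorm_def]
  exact Matrix.l2_opNorm_conjTranspose M

lemma specNorm_nonneg {a b : ℕ} (M : Matrix (Fin a) (Fin b) ℂ) : 0 ≤ specNorm M :=
  norm_nonneg _

open scoped Matrix.Norms.L2Operator in
lemma lpnorm_mulVec_le {a b : ℕ} (M : Matrix (Fin a) (Fin b) ℂ) (x : Fin b → ℂ) :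
    lpnorm 2 (M.mulVec x) ≤ specNorm M * lpnorm 2 x := by
  exact Matrix.l2_opNorm_mulVec M ((WithLp.equiv 2 (Fin b → ℂ)).symm x)

lemma lpnorm_col_le {a b : ℕ} (M : Matrix (Fin a) (Fin b) ℂ) (j : Fin b) :
    lpnorm 2 (fun i => M i j) ≤ specNorm M := by
  have h1 : (fun i => M i j) = M.mulVec (Pi.single j 1) := by
    funext i
    simp [Matrix.mulVec, dotProduct, Pi.single_apply, Finset.sum_ite_eq]
  have h2 : lpnorm 2 (Pi.single j (1:ℂ) : Fin b → ℂ) = 1 := by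
    rw [lpnorm_two_eq]
    have : ∑ i, ‖(Pi.single j (1:ℂ) : Fin b → ℂ) i‖ ^ 2 = 1 := by
      rw [Finset.sum_eq_single j]
      · simp
      · intro i _ hij; simp [Pi.single_apply, hij]
      · intro h; exact absurd (Finset.mem_univ j) h
    rw [this, Real.sqrt_one]
  calc lpnorm 2 (fun i => M i j) = lpnorm 2 (M.mulVec (Pi.single j 1)) := by rw [h1]
    _ ≤ specNorm M * lpnorm 2 (Pi.single j (1:ℂ)) := lpnorm_mulVec_le M _
    _ = specNorm M := by rw [h2, mul_one]

lemma frobSq_nonneg {a b : ℕ} (M : Matrix (Fin a) (Fin b) ℂ) : 0 ≤ frobSq M :=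
  Finset.sum_nonneg fun i _ => Finset.sum_nonneg fun j _ => sq_nonneg _

lemma frobSq_eq_sum_col {a b : ℕ} (M : Matrix (Fin a) (Fin b) ℂ) :
    frobSq M = ∑ j, (lpnorm 2 (fun i => M i j)) ^ 2 := by
  rw [frobSq, Finset.sum_comm]
  exact Finset.sum_congr rfl fun j _ => (lpnorm_two_sq _).symm

lemma frobSq_neg {a b : ℕ} (M : Matrix (Fin a) (Fin b) ℂ) : frobSq (-M) = frobSq M := by
  simp [frobSq]

lemma frobSq_conjT {a b : ℕ} (M : Matrix (Fin a) (Fin b) ℂ) : frobSq Mᴴ = frobSq M := by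
  rw [frobSq, Finset.sum_comm, frobSq]
  simp [Matrix.conjTranspose_apply]

lemma frobSq_mul_le {n : ℕ} (M N : Matrix (Fin n) (Fin n) ℂ) :
    frobSq (M * N) ≤ specNorm M ^ 2 * frobSq N := by
  rw [frobSq_eq_sum_col, frobSq_eq_sum_col, Finset.mul_sum]
  refine Finset.sum_le_sum fun j _ => ?_
  have hcol : (fun i => (M * N) i j) = M.mulVec (fun i => N i j) := by
    funext i
    simp [Matrix.mul_apply, Matrix.mulVec, dotProduct]
  rw [hcol, ← mul_pow]
  exact pow_le_pow_left₀ (lpnorm_nonneg _ _) (lpnorm_mulVec_le M _) 2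

lemma frobSq_le_of_cols {n : ℕ} (p : ℝ≥0∞) [Fact (1 ≤ p)] {q : ℝ} (hq : 0 ≤ 1 - q)
    (X Y : Matrix (Fin n) (Fin n) ℂ)
    (h : ∀ j, lpnorm p (fun i => X i j) ≤ (1 - q) * lpnorm p (fun i => Y i j)) :
    frobSq X ≤ (n:ℝ) ^ 2 * ((1 - q) * specNorm Y) ^ 2 := by
  rw [frobSq_eq_sum_col]
  have hstep : ∀ j : Fin n, (lpnorm 2 (fun i => X i j)) ^ 2
      ≤ (Real.sqrt n * ((1 - q) * specNorm Y)) ^ 2 := by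
    intro j
    refine pow_le_pow_left₀ (lpnorm_nonneg _ _) ?_ 2
    refine (key_bound p _ _ hq (h j)).trans ?_
    have := lpnorm_col_le Y j
    have h2 : (1 - q) * lpnorm 2 (fun i => Y i j) ≤ (1 - q) * specNorm Y :=
      mul_le_mul_of_nonneg_left (lpnorm_col_le Y j) hq
    exact mul_le_mul_of_nonneg_left h2 (Real.sqrt_nonneg _)
  calc ∑ j, (lpnorm 2 (fun i => X i j)) ^ 2
      ≤ ∑ _j : Fin n, (Real.sqrt n * ((1 - q) * specNorm Y)) ^ 2 :=
        Finset.sum_le_sum fun j _ => hstep j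
    _ = (n:ℝ) * (Real.sqrt n * ((1 - q) * specNorm Y)) ^ 2 := by
        simp [Finset.sum_const, Finset.card_univ, nsmul_eq_mul]
    _ = (n:ℝ) ^ 2 * ((1 - q) * specNorm Y) ^ 2 := by
        rw [mul_pow, Real.sq_sqrt (Nat.cast_nonneg n)]
        ring

/-- The misfit functional `J(X;A) = ½‖(X-A)A⁻¹‖_F² + ½‖A⁻¹(X-A)‖_F²` for invertible
square `A`. -/
noncomputable def JmisInv {m : ℕ} (X A : Matrix (Fin m) (Fin m) ℂ) : ℝ :=
  (1 / 2) * frobSq ((X - A) * A⁻¹) + (1 / 2) * frobSq (A⁻¹ * (X - A))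

/-- if the rows and columns of `B` approximate those of the invertible matrix
`A` to within a factor `1 - q` in the ℓ_p norm, then `J(B;A) ≤ m^{1+2C} (1-q)² κ(A)²`,
and consequently the infimum of `J(·;A)` over matrices supported inside the support of `B`
is at most this bound. -/
theorem stmt10 {m : ℕ} (A B : Matrix (Fin m) (Fin m) ℂ) (hA : IsUnit A.det)
    (p : ℝ≥0∞) [Fact (1 ≤ p)] (q : ℝ) (hq0 : 0 ≤ q) (hq1 : q ≤ 1)
    (hrow : ∀ i : Fin m,
      lpnorm p (fun j => A i j - B i j) ≤ (1 - q) * lpnorm p (fun j => A i j))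
    (hcol : ∀ j : Fin m,
      lpnorm p (fun i => A i j - B i j) ≤ (1 - q) * lpnorm p (fun i => A i j)) :
    JmisInv B A ≤
      (m : ℝ) ^ (1 + 2 * (1 - (1 / p).toReal + |1 / 2 - (1 / p).toReal|))
        * (1 - q) ^ 2 * (specNorm A * specNorm A⁻¹) ^ 2 ∧
    sInf {t : ℝ | ∃ X : Matrix (Fin m) (Fin m) ℂ,
        (∀ i j, B i j = 0 → X i j = 0) ∧ t = JmisInv X A} ≤
      (m : ℝ) ^ (1 + 2 * (1 - (1 / p).toReal + |1 / 2 - (1 / p).toReal|))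
        * (1 - q) ^ 2 * (specNorm A * specNorm A⁻¹) ^ 2 := by
  --

  classical
  have h1q : 0 ≤ 1 - q := by linarith
  have hcol' : ∀ j, lpnorm p (fun i => (A - B) i j) ≤ (1 - q) * lpnorm p (fun i => A i j) := by
    intro j
    have e : (fun i => (A - B) i j) = fun i => A i j - B i j := by
      funext i; simp [Matrix.sub_apply]
    rw [e]; exact hcol j
  have hAB : frobSq (A - B) ≤ (m:ℝ) ^ 2 * ((1 - q) * specNorm A) ^ 2 :=
    frobSq_le_of_cols p h1q _ _ hcol'
  have hrow' : ∀ j, lpnorm p (fun i => (A - B)ᴴ i j) ≤ (1 - q) * lpnorm p (fun i => Aᴴ i j) := by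
    intro j
    have e1 : lpnorm p (fun i => (A - B)ᴴ i j) = lpnorm p (fun i => A j i - B j i) :=
      lpnorm_congr p fun i => by
        simp [Matrix.conjTranspose_apply, Matrix.sub_apply, ← map_sub, Complex.norm_conj]
    have e2 : lpnorm p (fun i => Aᴴ i j) = lpnorm p (fun i => A j i) :=
      lpnorm_congr p fun i => by simp [Matrix.conjTranspose_apply]
    rw [e1, e2]; exact hrow j
  have hABt : frobSq ((A - B)ᴴ) ≤ (m:ℝ) ^ 2 * ((1 - q) * specNorm Aᴴ) ^ 2 :=
    frobSq_le_of_cols p h1q _ _ hrow'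
  rw [specNorm_conjT] at hABt
  have hT2 : frobSq (A⁻¹ * (B - A))
      ≤ specNorm A⁻¹ ^ 2 * ((m:ℝ) ^ 2 * ((1 - q) * specNorm A) ^ 2) := by
    have e : A⁻¹ * (B - A) = -(A⁻¹ * (A - B)) := by rw [← mul_neg, neg_sub]
    rw [e, frobSq_neg]
    exact (frobSq_mul_le _ _).trans (mul_le_mul_of_nonneg_left hAB (sq_nonneg _))
  have hT1 : frobSq ((B - A) * A⁻¹)
      ≤ specNorm A⁻¹ ^ 2 * ((m:ℝ) ^ 2 * ((1 - q) * specNorm A) ^ 2) := by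
    have e : (B - A) * A⁻¹ = -((A - B) * A⁻¹) := by rw [← neg_mul, neg_sub]
    rw [e, frobSq_neg, ← frobSq_conjT ((A - B) * A⁻¹), Matrix.conjTranspose_mul]
    refine (frobSq_mul_le _ _).trans ?_
    rw [specNorm_conjT]
    exact mul_le_mul_of_nonneg_left hABt (sq_nonneg _)
  have hmain0 : JmisInv B A ≤ (m:ℝ) ^ 2 * (1 - q) ^ 2 * (specNorm A * specNorm A⁻¹) ^ 2 := by
    rw [JmisInv]
    have e : specNorm A⁻¹ ^ 2 * ((m:ℝ) ^ 2 * ((1 - q) * specNorm A) ^ 2)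
        = (m:ℝ) ^ 2 * (1 - q) ^ 2 * (specNorm A * specNorm A⁻¹) ^ 2 := by ring
    linarith [hT1, hT2]
  set t := (1 / p).toReal with htdef
  have hhalf : (1:ℝ) / 2 ≤ 1 - t + |1 / 2 - t| := by
    have h := le_abs_self (t - 1 / 2)
    rw [← abs_sub_comm] at h
    linarith
  have hexp : (2:ℝ) ≤ 1 + 2 * (1 - t + |1 / 2 - t|) := by linarith
  have hm2 : (m:ℝ) ^ (2:ℕ) ≤ (m:ℝ) ^ ((1:ℝ) + 2 * (1 - t + |1 / 2 - t|)) := by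
    rcases Nat.eq_zero_or_pos m with hm | hm
    · subst hm
      simp only [Nat.cast_zero]
      rw [Real.zero_rpow (by linarith : (1:ℝ) + 2 * (1 - t + |1 / 2 - t|) ≠ 0)]
      norm_num
    · have h1m : (1:ℝ) ≤ (m:ℝ) := by exact_mod_cast hm
      calc (m:ℝ) ^ (2:ℕ) = (m:ℝ) ^ ((2:ℕ):ℝ) := (Real.rpow_natCast _ 2).symm
        _ ≤ _ := Real.rpow_le_rpow_of_exponent_le h1m (by push_cast; linarith)
  have main : JmisInv B A ≤
      (m : ℝ) ^ (1 + 2 * (1 - (1 / p).toReal + |1 / 2 - (1 / p).toReal|))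
        * (1 - q) ^ 2 * (specNorm A * specNorm A⁻¹) ^ 2 := by
    refine hmain0.trans ?_
    have hnn : 0 ≤ (1 - q) ^ 2 * (specNorm A * specNorm A⁻¹) ^ 2 := by positivity
    calc (m:ℝ) ^ 2 * (1 - q) ^ 2 * (specNorm A * specNorm A⁻¹) ^ 2
        = (m:ℝ) ^ (2:ℕ) * ((1 - q) ^ 2 * (specNorm A * specNorm A⁻¹) ^ 2) := by ring
      _ ≤ (m:ℝ) ^ ((1:ℝ) + 2 * (1 - t + |1 / 2 - t|))
            * ((1 - q) ^ 2 * (specNorm A * specNorm A⁻¹) ^ 2) :=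
          mul_le_mul_of_nonneg_right hm2 hnn
      _ = _ := by rw [htdef]; ring
  refine ⟨main, le_trans (csInf_le ?_ ?_) main⟩
  · refine ⟨0, fun s hs => ?_⟩
    obtain ⟨X, -, rfl⟩ := hs
    rw [JmisInv]
    have := frobSq_nonneg ((X - A) * A⁻¹)
    have := frobSq_nonneg (A⁻¹ * (X - A))
    linarith
  · exact ⟨B, fun i j h => h, rfl⟩
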